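/- Let G be a group, H a subgroup of G, (f_k : G → ℝ)_{k∈ℕ} a family of functions, and (D_k)_{k∈ℕ} nonnegative reals with D_k → 0, such that |f_k(gh) − f_k(g) − f_k(h)| ≤ D_k for all g, h ∈ G and all k. Suppose Cal : H → ℝ is a group homomorphism such that for every h ∈ H, f_k(h) → Cal(h) as k → ∞. If in addition there exists g ∈ G such that the sequence (f_k(g))_{k∈ℕ} has no limit in ℝ, then the set of group homomorphisms C : G → ℝ satisfying C(h) = Cal(h) for all h ∈ H is infinite. -/

import Mathlib

open Filter

noncomputable section

/-- The submodule of null sequences. -/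
def c0Sub : Submodule ℝ (ℕ → ℝ) where
  carrier := {s | Tendsto s atTop (nhds 0)}
  add_mem' := fun ha hb => by simpa [Pi.add_def] using Tendsto.add ha hb
  zero_mem' := tendsto_const_nhds
  smul_mem' := fun c s hs => by
    have := hs.const_mul c
    simpa [Pi.smul_def, smul_eq_mul] using this

/-- In the setting of the Calabi extension theorem, if moreover some `g ∈ G`
is such that the sequence `(f k g)_k` has no limit in `ℝ`, then there are infinitely many
group homomorphisms `G → ℝ` extending `Cal`. -/
theorem infinitely_many_calabi_extensions {G : Type*} [Group G] (H : Subgroup G)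
    (f : ℕ → G → ℝ) (D : ℕ → ℝ)
    (hD0 : ∀ k, 0 ≤ D k) (hDlim : Tendsto D atTop (nhds 0))
    (hdef : ∀ k : ℕ, ∀ g h : G, |f k (g * h) - f k g - f k h| ≤ D k)
    (Cal : H → ℝ) (hCal : ∀ a b : H, Cal (a * b) = Cal a + Cal b)
    (hconv : ∀ h : H, Tendsto (fun k => f k (h : G)) atTop (nhds (Cal h)))
    (hbad : ∃ g : G, ∀ L : ℝ, ¬ Tendsto (fun k => f k g) atTop (nhds L)) :
    {C : G → ℝ | (∀ a b : G, C (a * b) = C a + C b) ∧ ∀ h : H, C (h : G) = Cal h}.Infinite := by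
  classical
  obtain ⟨g, hg⟩ := hbad
  let φ : G → (ℕ → ℝ) ⧸ c0Sub := fun x => Submodule.Quotient.mk (fun k => f k x)
  let δ : ℝ →ₗ[ℝ] (ℕ → ℝ) ⧸ c0Sub :=
    c0Sub.mkQ.comp (LinearMap.pi fun _ => LinearMap.id)
  have hδ : ∀ c : ℝ, δ c = Submodule.Quotient.mk (fun _ => c) := fun c => rfl
  -- φ is additive
  have hφmul : ∀ a b : G, φ (a * b) = φ a + φ b := by
    intro a b
    show Submodule.Quotient.mk _ = Submodule.Quotient.mk _ + Submodule.Quotient.mk _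
    rw [← Submodule.Quotient.mk_add, Submodule.Quotient.eq]
    have h1 : Tendsto (fun k => |f k (a * b) - f k a - f k b|) atTop (nhds 0) :=
      squeeze_zero (fun k => abs_nonneg _) (fun k => hdef k a b) hDlim
    have h2 : Tendsto (fun k => f k (a * b) - f k a - f k b) atTop (nhds 0) :=
      squeeze_zero_norm (fun k => by simpa [Real.norm_eq_abs] using hdef k a b) hDlim
    have : (fun k => f k (a * b) - f k a - f k b) ∈ c0Sub := h2
    convert this using 1
    funext k
    simp [sub_sub]
  -- φ restricted to H is δ ∘ Cal
  have hφCal : ∀ h : H, φ (h : G) = δ (Cal h) := by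
    intro h
    rw [hδ]
    show Submodule.Quotient.mk _ = Submodule.Quotient.mk _
    rw [Submodule.Quotient.eq]
    have : Tendsto (fun k => f k (h : G) - Cal h) atTop (nhds 0) :=
      tendsto_sub_nhds_zero_iff.mpr (hconv h)
    exact this
  -- φ g is not in the image of δ
  have hgδ : ∀ c : ℝ, φ g ≠ δ c := by
    intro c hc
    have : Tendsto (fun k => f k g - c) atTop (nhds 0) := by
      rw [hδ, Submodule.Quotient.eq] at hc
      exact hc
    exact hg c (tendsto_sub_nhds_zero_iff.mp this)
  have hδsmul : ∀ c : ℝ, δ c = c • δ 1 := by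
    intro c; rw [← map_smul]; norm_num
  -- linear independence of δ 1 and φ g
  have li : LinearIndependent ℝ ![δ 1, φ g] := by
    rw [LinearIndependent.pair_iff]
    intro s t hst
    have ht : t = 0 := by
      by_contra ht
      apply hgδ (-(t⁻¹ * s))
      have h1 : t • φ g = -(s • δ 1) := by
        rw [eq_neg_iff_add_eq_zero, add_comm]; exact hst
      have h2 : φ g = (-(t⁻¹ * s)) • δ 1 := by
        calc φ g = t⁻¹ • (t • φ g) := by
              rw [smul_smul, inv_mul_cancel₀ ht, one_smul]
          _ = t⁻¹ • (-(s • δ 1)) := by rw [h1]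
          _ = (-(t⁻¹ * s)) • δ 1 := by rw [smul_neg, smul_smul, ← neg_smul]
      rw [h2, ← hδsmul]
    have hs0 : s • δ 1 = 0 := by
      rw [ht, zero_smul, add_zero] at hst; exact hst
    have hsδ : δ s = 0 := by rw [hδsmul]; exact hs0
    have : (fun _ : ℕ => s) ∈ c0Sub :=
      (Submodule.Quotient.mk_eq_zero _).mp (by rw [← hδ]; exact hsδ)
    have : Tendsto (fun _ : ℕ => s) atTop (nhds 0) := this
    have hs : s = 0 := tendsto_const_nhds_iff.mp this
    exact ⟨hs, ht⟩
  have hne : δ 1 ≠ φ g := fun h => hgδ 1 h.symm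
  have liset : LinearIndepOn ℝ id (Set.range ![δ 1, φ g]) :=
      (linearIndepOn_id_range_iff li.injective).mpr li
  let b := Module.Basis.extend liset
  have hmem0 : δ 1 ∈ liset.extend (Set.subset_univ _) :=
    liset.subset_extend _ ⟨0, by simp⟩
  have hmem1 : φ g ∈ liset.extend (Set.subset_univ _) :=
    liset.subset_extend _ ⟨1, by simp⟩
  let i0 : ↥(liset.extend (Set.subset_univ _)) := ⟨δ 1, hmem0⟩
  let i1 : ↥(liset.extend (Set.subset_univ _)) := ⟨φ g, hmem1⟩
  have hii : i0 ≠ i1 := fun h => hne (congrArg Subtype.val h)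
  have hb0 : b i0 = δ 1 := Module.Basis.extend_apply_self _ _
  have hb1 : b i1 = φ g := Module.Basis.extend_apply_self _ _
  -- coordinate computations
  have c00 : b.coord i0 (δ 1) = 1 := by
    have : b.coord i0 (b i0) = 1 := by
      simp [Module.Basis.coord_apply, Module.Basis.repr_self]
    rwa [hb0] at this
  have c01 : b.coord i1 (δ 1) = 0 := by
    have : b.coord i1 (b i0) = 0 := by
      simp [Module.Basis.coord_apply, Module.Basis.repr_self, Finsupp.single_apply, hii]
    rwa [hb0] at this
  have c10 : b.coord i0 (φ g) = 0 := by
    have : b.coord i0 (b i1) = 0 := by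
      simp [Module.Basis.coord_apply, Module.Basis.repr_self, Finsupp.single_apply, hii.symm]
    rwa [hb1] at this
  have c11 : b.coord i1 (φ g) = 1 := by
    have : b.coord i1 (b i1) = 1 := by
      simp [Module.Basis.coord_apply, Module.Basis.repr_self]
    rwa [hb1] at this
  have cδ0 : ∀ c : ℝ, b.coord i0 (δ c) = c := by
    intro c
    rw [hδsmul c, map_smul, c00]; simp
  have cδ1 : ∀ c : ℝ, b.coord i1 (δ c) = 0 := by
    intro c
    rw [hδsmul c, map_smul, c01]; simp
  -- the family of extensions
  let Cfun : ℝ → (G → ℝ) := fun t x => b.coord i0 (φ x) + t * b.coord i1 (φ x)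
  have hCg : ∀ t : ℝ, Cfun t g = t := by
    intro t; simp only [Cfun, c10, c11]; ring
  have hmem : ∀ t : ℝ, Cfun t ∈ {C : G → ℝ |
      (∀ a b : G, C (a * b) = C a + C b) ∧ ∀ h : H, C (h : G) = Cal h} := by
    intro t
    constructor
    · intro a c
      simp only [Cfun, hφmul a c, map_add]
      ring
    · intro h
      simp only [Cfun, hφCal h, cδ0, cδ1]
      ring
  have hinj : Function.Injective Cfun := by
    intro s t hst
    have := congrFun hst g
    rwa [hCg, hCg] at this
  exact Set.infinite_of_injective_forall_mem hinj hmem
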